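/- Let T be a compact connected topological 2-manifold (a nonempty T2 charted space over EuclideanSpace ℝ (Fin 2)) and let z¹, …, z^{k+n} be pairwise distinct points of T, with n ≥ 1. Let ℱ_k denote the subspace of the homeomorphism group Homeomorph T T consisting of homeomorphisms fixing each of z¹, …, z^k, and ℱ_{k+n} the subspace of homeomorphisms fixing each of z¹, …, z^{k+n}, both with the compact-open topology. Then the evaluation map ε : ℱ_k → Conf_n(T ∖ {z¹,…,z^k}), ε(h) = (h(z^{k+1}), …, h(z^{k+n})), is a surjective locally trivial fibering with fibre ℱ_{k+n}: ε is continuous and surjective, and every point of Conf_n(T ∖ {z¹,…,z^k}) has an open neighborhood U together with a homeomorphism ε⁻¹(U) ≃ₜ U × ℱ_{k+n} commuting with the projections to U. -/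

import Mathlib

/-- The ordered configuration space of `n` points of a topological space `X`. -/
abbrev Conf (n : ℕ) (X : Type*) [TopologicalSpace X] : Type _ :=
  {f : Fin n → X // Function.Injective f}

/-- The compact-open topology on the group of self-homeomorphisms of a space,
induced from the compact-open topology on `C(T, T)`. -/
noncomputable instance Homeomorph.instTopologicalSpaceCompactOpen
    (T : Type*) [TopologicalSpace T] : TopologicalSpace (T ≃ₜ T) :=
  TopologicalSpace.induced (fun h => (h : C(T, T)))
    ContinuousMap.compactOpen

open Metric Set NNReal

noncomputable section BumpFamily

variable {E : Type*} [NormedAddCommGroup E] [NormedSpace ℝ E] [CompleteSpace E]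

/-- The radial translation map: `u ↦ u + max (1 - ‖u-x₀‖/r) 0 • (v - x₀)`. -/
def bump (r : ℝ) (x₀ v u : E) : E := u + (max (1 - ‖u - x₀‖ / r) 0) • (v - x₀)

omit [NormedSpace ℝ E] [CompleteSpace E] in
lemma phi_le_one {r : ℝ} (hr : 0 < r) (t : ℝ) (ht : 0 ≤ t) : max (1 - t / r) 0 ≤ 1 := by
  apply max_le _ zero_le_one
  have := div_nonneg ht hr.le
  linarith

lemma phi_lipschitz {r : ℝ} (hr : 0 < r) (s t : ℝ) :
    |max (1 - s / r) 0 - max (1 - t / r) 0| ≤ |s - t| / r := by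
  have h1 : |max (1 - s / r) 0 - max (1 - t / r) 0| ≤ |(1 - s / r) - (1 - t / r)| :=
    abs_max_sub_max_le_abs _ _ _
  have h2 : |(1 - s / r) - (1 - t / r)| = |s - t| / r := by
    rw [show (1 - s / r) - (1 - t / r) = (t - s) / r by ring, abs_div, abs_of_pos hr,
      abs_sub_comm]
  rw [h2] at h1; exact h1

lemma bump_sub_lipschitz {r : ℝ} (hr : 0 < r) (x₀ v u u' : E) :
    ‖(bump r x₀ v u - u) - (bump r x₀ v u' - u')‖ ≤ ‖v - x₀‖ / r * ‖u - u'‖ := by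
  have : (bump r x₀ v u - u) - (bump r x₀ v u' - u')
      = (max (1 - ‖u - x₀‖ / r) 0 - max (1 - ‖u' - x₀‖ / r) 0) • (v - x₀) := by
    simp [bump, sub_smul]
  rw [this, norm_smul, Real.norm_eq_abs]
  have h1 := phi_lipschitz hr ‖u - x₀‖ ‖u' - x₀‖
  have h2 : |‖u - x₀‖ - ‖u' - x₀‖| ≤ ‖u - u'‖ := by
    have := abs_norm_sub_norm_le (u - x₀) (u' - x₀)
    rwa [show u - x₀ - (u' - x₀) = u - u' by abel] at this
  have h3 : |max (1 - ‖u - x₀‖ / r) 0 - max (1 - ‖u' - x₀‖ / r) 0| ≤ ‖u - u'‖ / r :=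
    h1.trans (by gcongr)
  calc |max (1 - ‖u - x₀‖ / r) 0 - max (1 - ‖u' - x₀‖ / r) 0| * ‖v - x₀‖
      ≤ (‖u - u'‖ / r) * ‖v - x₀‖ := by
        apply mul_le_mul_of_nonneg_right h3 (norm_nonneg _)
    _ = ‖v - x₀‖ / r * ‖u - u'‖ := by ring

lemma bump_v_lipschitz {r : ℝ} (hr : 0 < r) (x₀ v v' u : E) :
    ‖bump r x₀ v u - bump r x₀ v' u‖ ≤ ‖v - v'‖ := by
  have : bump r x₀ v u - bump r x₀ v' u = (max (1 - ‖u - x₀‖ / r) 0) • (v - v') := by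
    simp [bump, smul_sub]
  rw [this, norm_smul, Real.norm_eq_abs, abs_of_nonneg (le_max_right _ _)]
  have := phi_le_one hr ‖u - x₀‖ (norm_nonneg _)
  nlinarith [norm_nonneg (v - v')]

lemma bump_apply_center {r : ℝ} (hr : 0 < r) (x₀ v : E) : bump r x₀ v x₀ = v := by
  have : max (1 - ‖x₀ - x₀‖ / r) 0 = 1 := by simp
  simp [bump, this]

lemma bump_apply_far {r : ℝ} (hr : 0 < r) (x₀ v u : E) (hu : r ≤ ‖u - x₀‖) :
    bump r x₀ v u = u := by
  have : max (1 - ‖u - x₀‖ / r) 0 = 0 := by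
    apply max_eq_right
    rw [sub_nonpos, le_div_iff₀ hr]
    linarith
  simp [bump, this]

lemma bump_mem_ball {r : ℝ} (hr : 0 < r) {x₀ v u : E} (hv : ‖v - x₀‖ ≤ r / 2)
    (hu : u ∈ ball x₀ r) : bump r x₀ v u ∈ ball x₀ r := by
  rw [mem_ball, dist_eq_norm] at hu ⊢
  have key : ‖bump r x₀ v u - x₀‖ ≤ ‖u - x₀‖ + (max (1 - ‖u - x₀‖ / r) 0) * ‖v - x₀‖ := by
    calc ‖bump r x₀ v u - x₀‖ = ‖(u - x₀) + (max (1 - ‖u - x₀‖ / r) 0) • (v - x₀)‖ := by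
          unfold bump; congr 1; abel
      _ ≤ ‖u - x₀‖ + ‖(max (1 - ‖u - x₀‖ / r) 0) • (v - x₀)‖ := norm_add_le _ _
      _ = ‖u - x₀‖ + (max (1 - ‖u - x₀‖ / r) 0) * ‖v - x₀‖ := by
          rw [norm_smul, Real.norm_eq_abs, abs_of_nonneg (le_max_right _ _)]
  rcases le_or_gt (1 - ‖u - x₀‖ / r) 0 with h | h
  · rw [max_eq_right h] at key
    have : ‖bump r x₀ v u - x₀‖ ≤ ‖u - x₀‖ := by simpa using key
    linarith
  · rw [max_eq_left h.le] at key
    have h4 : (1 - ‖u - x₀‖ / r) * ‖v - x₀‖ ≤ (1 - ‖u - x₀‖ / r) * (r / 2) :=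
      mul_le_mul_of_nonneg_left hv h.le
    have h7 : (1 - ‖u - x₀‖ / r) * (r / 2) = r / 2 - ‖u - x₀‖ / 2 := by
      field_simp; try ring
    have h5 : ‖u - x₀‖ / r < 1 := by
      rw [div_lt_one hr]; exact hu
    linarith

/-- The contraction whose fixed point is `(bump r x₀ v)⁻¹ w`. -/
lemma bump_contraction {r : ℝ} (hr : 0 < r) {x₀ v : E} (hv : ‖v - x₀‖ ≤ r / 2) (w : E) :
    ContractingWith (1/2 : ℝ≥0) (fun u => w - (bump r x₀ v u - u)) := by
  constructor
  · have : ((1/2 : ℝ≥0) : ℝ) < ((1:ℝ≥0):ℝ) := by norm_num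
    exact_mod_cast this
  · apply LipschitzWith.of_dist_le_mul
    intro u u'
    rw [dist_eq_norm, dist_eq_norm]
    have h1 := bump_sub_lipschitz hr x₀ v u u'
    have h2 : ‖v - x₀‖ / r ≤ 1/2 := by
      rw [div_le_iff₀ hr]; linarith
    calc ‖(w - (bump r x₀ v u - u)) - (w - (bump r x₀ v u' - u'))‖
        = ‖(bump r x₀ v u - u) - (bump r x₀ v u' - u')‖ := by
          rw [← norm_neg]; congr 1; abel
      _ ≤ ‖v - x₀‖ / r * ‖u - u'‖ := h1
      _ ≤ 1/2 * ‖u - u'‖ := by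
          apply mul_le_mul_of_nonneg_right h2 (norm_nonneg _)
      _ = ((1/2 : ℝ≥0) : ℝ) * ‖u - u'‖ := by norm_num

variable [Nonempty E]

/-- Inverse of the radial translation, via the Banach fixed point theorem. -/
def binv {r : ℝ} (hr : 0 < r) (x₀ : E) {v : E} (hv : ‖v - x₀‖ ≤ r / 2) (w : E) : E :=
  (bump_contraction hr hv w).fixedPoint _

lemma bump_binv {r : ℝ} (hr : 0 < r) (x₀ : E) {v : E} (hv : ‖v - x₀‖ ≤ r / 2) (w : E) :
    bump r x₀ v (binv hr x₀ hv w) = w := by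
  have h := (bump_contraction hr hv w).fixedPoint_isFixedPt
  unfold Function.IsFixedPt at h
  set u := binv hr x₀ hv w
  have h1 : w - (bump r x₀ v u - u) = u := h
  rw [sub_eq_iff_eq_add] at h1
  rw [add_comm, sub_add_cancel] at h1
  exact h1.symm

lemma binv_bump {r : ℝ} (hr : 0 < r) (x₀ : E) {v : E} (hv : ‖v - x₀‖ ≤ r / 2) (u : E) :
    binv hr x₀ hv (bump r x₀ v u) = u := by
  symm
  apply (bump_contraction hr hv (bump r x₀ v u)).fixedPoint_unique
  show (fun u' => bump r x₀ v u - (bump r x₀ v u' - u')) u = u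
  simp

end BumpFamily

section BumpFamily2

variable {E : Type*} [NormedAddCommGroup E] [NormedSpace ℝ E] [CompleteSpace E] [Nonempty E]
variable {r : ℝ} (hr : 0 < r) (x₀ : E)

lemma binv_apply_far {v : E} (hv : ‖v - x₀‖ ≤ r / 2) (u : E) (hu : r ≤ ‖u - x₀‖) :
    binv hr x₀ hv u = u := by
  conv_lhs => rw [← bump_apply_far hr x₀ v u hu]
  exact binv_bump hr x₀ hv u

lemma binv_mem_ball {v : E} (hv : ‖v - x₀‖ ≤ r / 2) {w : E} (hw : w ∈ Metric.ball x₀ r) :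
    binv hr x₀ hv w ∈ Metric.ball x₀ r := by
  by_contra h
  rw [Metric.mem_ball, dist_eq_norm, not_lt] at h
  have := bump_apply_far hr x₀ v _ h
  rw [bump_binv hr x₀ hv w] at this
  rw [Metric.mem_ball, dist_eq_norm] at hw
  rw [← this] at h
  exact absurd hw (not_lt.mpr h)

lemma bump_continuous : Continuous (fun p : E × E => bump r x₀ p.1 p.2) := by
  unfold bump
  fun_prop

lemma binv_bound {v v' : E} (hv : ‖v - x₀‖ ≤ r / 2) (hv' : ‖v' - x₀‖ ≤ r / 2) (w w' : E) :
    ‖binv hr x₀ hv w - binv hr x₀ hv' w'‖ ≤ 2 * (‖w - w'‖ + ‖v - v'‖) := by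
  set u := binv hr x₀ hv w with hu
  set u' := binv hr x₀ hv' w' with hu'
  have e1 : bump r x₀ v u = w := bump_binv hr x₀ hv w
  have e2 : bump r x₀ v' u' = w' := bump_binv hr x₀ hv' w'
  have key : u - u' = (w - w') - ((bump r x₀ v u - u) - (bump r x₀ v' u' - u')) := by
    rw [e1, e2]; abel
  have h1 : ‖(bump r x₀ v u - u) - (bump r x₀ v u' - u')‖ ≤ 1/2 * ‖u - u'‖ := by
    refine (bump_sub_lipschitz hr x₀ v u u').trans ?_
    apply mul_le_mul_of_nonneg_right _ (norm_nonneg _)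
    rw [div_le_iff₀ hr]; linarith
  have h2 : ‖(bump r x₀ v u' - u') - (bump r x₀ v' u' - u')‖ ≤ ‖v - v'‖ := by
    have : (bump r x₀ v u' - u') - (bump r x₀ v' u' - u') = bump r x₀ v u' - bump r x₀ v' u' := by
      abel
    rw [this]; exact bump_v_lipschitz hr x₀ v v' u'
  have h3 : ‖(bump r x₀ v u - u) - (bump r x₀ v' u' - u')‖ ≤ 1/2 * ‖u - u'‖ + ‖v - v'‖ := by
    calc ‖(bump r x₀ v u - u) - (bump r x₀ v' u' - u')‖
        = ‖((bump r x₀ v u - u) - (bump r x₀ v u' - u')) + ((bump r x₀ v u' - u') - (bump r x₀ v' u' - u'))‖ := by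
          congr 1; abel
      _ ≤ _ := norm_add_le _ _
      _ ≤ 1/2 * ‖u - u'‖ + ‖v - v'‖ := add_le_add h1 h2
  have h4 : ‖u - u'‖ ≤ ‖w - w'‖ + (1/2 * ‖u - u'‖ + ‖v - v'‖) := by
    calc ‖u - u'‖ = ‖(w - w') - ((bump r x₀ v u - u) - (bump r x₀ v' u' - u'))‖ := by rw [key]
      _ ≤ ‖w - w'‖ + ‖(bump r x₀ v u - u) - (bump r x₀ v' u' - u')‖ := norm_sub_le _ _
      _ ≤ _ := by linarith
  linarith

lemma norm_le_of_mem_ball_half {v : E} (h : v ∈ Metric.ball x₀ (r/2)) : ‖v - x₀‖ ≤ r/2 := by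
  rw [Metric.mem_ball, dist_eq_norm] at h; exact h.le

lemma binv_continuous :
    Continuous (fun p : {v : E // v ∈ Metric.ball x₀ (r/2)} × E =>
      binv hr x₀ (norm_le_of_mem_ball_half x₀ p.1.2) p.2) := by
  rw [Metric.continuous_iff]
  intro b ε hε
  refine ⟨ε/5, by linarith, fun a hab => ?_⟩
  have hb := binv_bound hr x₀
    (norm_le_of_mem_ball_half x₀ a.1.2) (norm_le_of_mem_ball_half x₀ b.1.2) a.2 b.2
  have hd1 : ‖a.2 - b.2‖ ≤ dist a b := by
    rw [Prod.dist_eq]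
    exact le_trans (by rw [dist_eq_norm]) (le_max_right _ _)
  have hd2 : ‖a.1.1 - b.1.1‖ ≤ dist a b := by
    rw [Prod.dist_eq]
    refine le_trans ?_ (le_max_left _ _)
    rw [Subtype.dist_eq, dist_eq_norm]
  rw [dist_eq_norm]
  calc ‖_ - _‖ ≤ 2 * (‖a.2 - b.2‖ + ‖a.1.1 - b.1.1‖) := hb
    _ ≤ 2 * (dist a b + dist a b) := by linarith
    _ < ε := by linarith

end BumpFamily2
section Transfer

open Metric Set

variable {T : Type*} [TopologicalSpace T] [T2Space T]
  [ChartedSpace (EuclideanSpace ℝ (Fin 2)) T]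

local notation "𝔼" => EuclideanSpace ℝ (Fin 2)

/-- Local family of homeomorphisms of a surface `T`: for every `x` and open `W ∋ x`
there are an open `V` with `x ∈ V ⊆ W` and a continuous family `Γ` of homeomorphisms of `T`
supported in `W` with `Γ y x = y`. -/
theorem exists_local_homeo_family (x : T) (W : Set T) (hW : IsOpen W) (hxW : x ∈ W) :
    ∃ V : Set T, IsOpen V ∧ x ∈ V ∧ V ⊆ W ∧
    ∃ Γ : V → (T ≃ₜ T),
      (∀ y, Γ y x = y.1) ∧
      (∀ y t, t ∉ W → Γ y t = t) ∧
      Continuous (fun y => ((Γ y : T ≃ₜ T) : C(T,T))) ∧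
      Continuous (fun y => (((Γ y).symm : T ≃ₜ T) : C(T,T))) := by
  classical
  set e := chartAt 𝔼 x with he
  have hxe : x ∈ e.source := mem_chart_source 𝔼 x
  set s : Set T := e.source ∩ W with hs
  have hso : IsOpen s := e.open_source.inter hW
  have hxs : x ∈ s := ⟨hxe, hxW⟩
  have himg : IsOpen (e '' s) := e.isOpen_image_of_subset_source hso inter_subset_left
  have hxin : e x ∈ e '' s := mem_image_of_mem _ hxs
  obtain ⟨ε, hε, hball⟩ := Metric.isOpen_iff.1 himg _ hxin
  set x₀ := e x with hx₀
  set r := ε / 2 with hrdef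
  have hr : 0 < r := by positivity
  have hsub : closedBall x₀ r ⊆ e '' s :=
    (closedBall_subset_ball (by linarith)).trans hball
  have hst : e '' s ⊆ e.target := by
    rw [← e.image_source_eq_target]; exact image_mono inter_subset_left
  have hballt : ball x₀ r ⊆ e.target := (ball_subset_closedBall.trans hsub).trans hst
  -- the compact support set in T
  set Kt : Set T := e.symm '' closedBall x₀ r with hKt
  have hKts : Kt ⊆ s := by
    intro t ht
    obtain ⟨u, hu, rfl⟩ := ht
    obtain ⟨t', ht', rfl⟩ := hsub hu
    rw [e.left_inv ht'.1]
    exact ht'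
  have hKtc : IsCompact Kt :=
    (isCompact_closedBall x₀ r).image_of_continuousOn
      (e.continuousOn_symm.mono (hsub.trans hst))
  have hKtcl : IsClosed Kt := hKtc.isClosed
  -- mapping properties of bump/binv on the chart target
  have hbt : ∀ (v : 𝔼), ‖v - x₀‖ ≤ r/2 → ∀ u ∈ e.target, bump r x₀ v u ∈ e.target := by
    intro v hv u hu
    rcases lt_or_ge ‖u - x₀‖ r with h | h
    · exact hballt (bump_mem_ball hr hv (by rwa [mem_ball, dist_eq_norm]))
    · rwa [bump_apply_far hr x₀ v u h]
  have hit : ∀ (v : 𝔼) (hv : ‖v - x₀‖ ≤ r/2), ∀ u ∈ e.target,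
      binv hr x₀ hv u ∈ e.target := by
    intro v hv u hu
    rcases lt_or_ge ‖u - x₀‖ r with h | h
    · exact hballt (binv_mem_ball hr x₀ hv (by rwa [mem_ball, dist_eq_norm]))
    · rwa [binv_apply_far hr x₀ hv u h]
  -- the two joint maps
  set Vb : Type _ := {v : 𝔼 // v ∈ ball x₀ (r/2)} with hVb
  have hVnorm : ∀ v : Vb, ‖v.1 - x₀‖ ≤ r/2 := fun v => norm_le_of_mem_ball_half x₀ v.2
  set F : Vb × T → T := fun p => if p.2 ∈ e.source then e.symm (bump r x₀ p.1.1 (e p.2)) else p.2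
    with hF
  set G : Vb × T → T :=
    fun p => if p.2 ∈ e.source then e.symm (binv hr x₀ (hVnorm p.1) (e p.2)) else p.2 with hG
  -- off the support both maps are the identity
  have hFsupp : ∀ (v : Vb) (t : T), t ∉ Kt → F (v, t) = t := by
    intro v t ht
    by_cases hts : t ∈ e.source
    · have het : e t ∉ closedBall x₀ r := by
        intro h
        exact ht ⟨e t, h, e.left_inv hts⟩
      have : r ≤ ‖e t - x₀‖ := by
        rw [mem_closedBall, dist_eq_norm, not_le] at het
        exact het.le
      simp only [hF, if_pos hts]
      rw [bump_apply_far hr x₀ v.1 (e t) this, e.left_inv hts]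
    · simp only [hF, if_neg hts]
  have hGsupp : ∀ (v : Vb) (t : T), t ∉ Kt → G (v, t) = t := by
    intro v t ht
    by_cases hts : t ∈ e.source
    · have het : e t ∉ closedBall x₀ r := by
        intro h
        exact ht ⟨e t, h, e.left_inv hts⟩
      have : r ≤ ‖e t - x₀‖ := by
        rw [mem_closedBall, dist_eq_norm, not_le] at het
        exact het.le
      simp only [hG, if_pos hts]
      rw [binv_apply_far hr x₀ (hVnorm v) (e t) this, e.left_inv hts]
    · simp only [hG, if_neg hts]
  -- joint continuity
  have hFc : Continuous F := by
    rw [continuous_iff_continuousAt]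
    intro p
    by_cases hp : p.2 ∈ e.source
    · have hA : IsOpen {q : Vb × T | q.2 ∈ e.source} := e.open_source.preimage continuous_snd
      have h1 : ContinuousOn (fun q : Vb × T => e q.2) {q : Vb × T | q.2 ∈ e.source} :=
        e.continuousOn.comp continuous_snd.continuousOn (fun q hq => hq)
      have hpair : ContinuousOn (fun q : Vb × T => ((q.1.1, e q.2) : 𝔼 × 𝔼))
          {q : Vb × T | q.2 ∈ e.source} :=
        ((continuous_subtype_val.comp continuous_fst).continuousOn).prodMk h1
      have h2 : ContinuousOn (fun q : Vb × T => bump r x₀ q.1.1 (e q.2))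
          {q : Vb × T | q.2 ∈ e.source} :=
        (bump_continuous (r := r) (x₀ := x₀)).comp_continuousOn hpair
      have h3 : ContinuousOn (fun q : Vb × T => e.symm (bump r x₀ q.1.1 (e q.2)))
          {q : Vb × T | q.2 ∈ e.source} := by
        apply e.continuousOn_symm.comp h2
        intro q hq
        exact hbt q.1.1 (hVnorm q.1) _ (e.map_source hq)
      have : ContinuousAt (fun q : Vb × T => e.symm (bump r x₀ q.1.1 (e q.2))) p :=
        h3.continuousAt (hA.mem_nhds hp)
      apply this.congr
      filter_upwards [hA.mem_nhds hp] with q hq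
      simp only [hF, if_pos hq]
    · have hpK : p.2 ∉ Kt := fun h => hp (hKts h).1
      have hB : IsOpen {q : Vb × T | q.2 ∉ Kt} := hKtcl.isOpen_compl.preimage continuous_snd
      have : ContinuousAt (fun q : Vb × T => q.2) p := continuous_snd.continuousAt
      apply this.congr
      filter_upwards [hB.mem_nhds hpK] with q hq
      exact (hFsupp q.1 q.2 hq).symm
  have hGc : Continuous G := by
    rw [continuous_iff_continuousAt]
    intro p
    by_cases hp : p.2 ∈ e.source
    · have hA : IsOpen {q : Vb × T | q.2 ∈ e.source} := e.open_source.preimage continuous_snd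
      have h1 : ContinuousOn (fun q : Vb × T => e q.2) {q : Vb × T | q.2 ∈ e.source} :=
        e.continuousOn.comp continuous_snd.continuousOn (fun q hq => hq)
      have hpair : ContinuousOn (fun q : Vb × T =>
          ((q.1, e q.2) : {v : 𝔼 // v ∈ Metric.ball x₀ (r/2)} × 𝔼))
          {q : Vb × T | q.2 ∈ e.source} :=
        (continuous_fst.continuousOn).prodMk h1
      have h2 : ContinuousOn (fun q : Vb × T => binv hr x₀ (hVnorm q.1) (e q.2))
          {q : Vb × T | q.2 ∈ e.source} :=
        (binv_continuous hr x₀).comp_continuousOn hpair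
      have h3 : ContinuousOn (fun q : Vb × T => e.symm (binv hr x₀ (hVnorm q.1) (e q.2)))
          {q : Vb × T | q.2 ∈ e.source} := by
        apply e.continuousOn_symm.comp h2
        intro q hq
        exact hit q.1.1 (hVnorm q.1) _ (e.map_source hq)
      have : ContinuousAt (fun q : Vb × T => e.symm (binv hr x₀ (hVnorm q.1) (e q.2))) p :=
        h3.continuousAt (hA.mem_nhds hp)
      apply this.congr
      filter_upwards [hA.mem_nhds hp] with q hq
      simp only [hG, if_pos hq]
    · have hpK : p.2 ∉ Kt := fun h => hp (hKts h).1
      have hB : IsOpen {q : Vb × T | q.2 ∉ Kt} := hKtcl.isOpen_compl.preimage continuous_snd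
      have : ContinuousAt (fun q : Vb × T => q.2) p := continuous_snd.continuousAt
      apply this.congr
      filter_upwards [hB.mem_nhds hpK] with q hq
      exact (hGsupp q.1 q.2 hq).symm
  -- F and G are mutually inverse
  have hFG : ∀ (v : Vb) (t : T), F (v, G (v, t)) = t := by
    intro v t
    by_cases hts : t ∈ e.source
    · have h1 : binv hr x₀ (hVnorm v) (e t) ∈ e.target := hit v.1 (hVnorm v) _ (e.map_source hts)
      have h2 : e.symm (binv hr x₀ (hVnorm v) (e t)) ∈ e.source := e.map_target h1
      simp only [hG, hF, if_pos hts, if_pos h2, e.right_inv h1]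
      rw [bump_binv hr x₀ (hVnorm v) (e t), e.left_inv hts]
    · simp only [hG, hF, if_neg hts]
  have hGF : ∀ (v : Vb) (t : T), G (v, F (v, t)) = t := by
    intro v t
    by_cases hts : t ∈ e.source
    · have h1 : bump r x₀ v.1 (e t) ∈ e.target := hbt v.1 (hVnorm v) _ (e.map_source hts)
      have h2 : e.symm (bump r x₀ v.1 (e t)) ∈ e.source := e.map_target h1
      simp only [hF, hG, if_pos hts, if_pos h2, e.right_inv h1]
      rw [binv_bump hr x₀ (hVnorm v) (e t), e.left_inv hts]
    · simp only [hF, hG, if_neg hts]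
  -- package as homeomorphisms
  set Γ₀ : Vb → T ≃ₜ T := fun v =>
    { toFun := fun t => F (v, t)
      invFun := fun t => G (v, t)
      left_inv := fun t => hGF v t
      right_inv := fun t => hFG v t
      continuous_toFun := hFc.comp (Continuous.prodMk_right v)
      continuous_invFun := hGc.comp (Continuous.prodMk_right v) } with hΓ₀
  have hΓ₀c : Continuous (fun v : Vb => ((Γ₀ v : T ≃ₜ T) : C(T,T))) := by
    have : (fun v : Vb => ((Γ₀ v : T ≃ₜ T) : C(T,T))) = ⇑(ContinuousMap.curry ⟨F, hFc⟩) :=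
      funext fun v => ContinuousMap.ext fun t => rfl
    rw [this]
    exact (ContinuousMap.curry ⟨F, hFc⟩).continuous
  have hΓ₀cs : Continuous (fun v : Vb => (((Γ₀ v).symm : T ≃ₜ T) : C(T,T))) := by
    have : (fun v : Vb => (((Γ₀ v).symm : T ≃ₜ T) : C(T,T))) = ⇑(ContinuousMap.curry ⟨G, hGc⟩) :=
      funext fun v => ContinuousMap.ext fun t => rfl
    rw [this]
    exact (ContinuousMap.curry ⟨G, hGc⟩).continuous
  -- the neighbourhood V in T
  refine ⟨(e.source ∩ e ⁻¹' (ball x₀ (r/2))) ∩ W, ?_, ?_, inter_subset_right, ?_⟩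
  · exact (e.isOpen_inter_preimage isOpen_ball).inter hW
  · exact ⟨⟨hxe, by exact mem_ball_self (half_pos hr)⟩, hxW⟩
  · set V : Set T := (e.source ∩ e ⁻¹' (ball x₀ (r/2))) ∩ W with hV
    have hiv : ∀ y : V, e y.1 ∈ ball x₀ (r/2) := fun y => y.2.1.2
    set ι : V → Vb := fun y => ⟨e y.1, hiv y⟩ with hι
    have hιc : Continuous ι := by
      apply Continuous.subtype_mk
      exact e.continuousOn.comp_continuous continuous_subtype_val (fun y => y.2.1.1)
    refine ⟨fun y => Γ₀ (ι y), ?_, ?_, hΓ₀c.comp hιc, hΓ₀cs.comp hιc⟩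
    · intro y
      show F (ι y, x) = y.1
      simp only [hF, if_pos hxe]
      rw [← hx₀, bump_apply_center hr x₀ (e y.1), e.left_inv y.2.1.1]
    · intro y t ht
      have htK : t ∉ Kt := fun h => ht ((hKts h).2)
      exact hFsupp (ι y) t htK

end Transfer
section Connectivity

open Metric Set

local notation "𝔼" => EuclideanSpace ℝ (Fin 2)

lemma one_lt_rank_euclidean : 1 < Module.rank ℝ 𝔼 := by
  have h : (Module.finrank ℝ 𝔼 : Cardinal) = Module.rank ℝ 𝔼 := Module.finrank_eq_rank ℝ 𝔼
  rw [← h]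
  have : Module.finrank ℝ 𝔼 = 2 := finrank_euclideanSpace_fin
  rw [this]
  exact_mod_cast one_lt_two

lemma isPreconnected_ball_diff_singleton (x₀ : 𝔼) (r : ℝ) (a : 𝔼) :
    IsPreconnected (ball x₀ r \ {a}) := by
  by_cases ha : a ∈ ball x₀ r
  · have hr : 0 < r := pos_of_mem_ball ha
    set g := OpenPartialHomeomorph.univBall x₀ r with hg
    have hsrc : g.source = univ := OpenPartialHomeomorph.univBall_source x₀ r
    have htgt : g.target = ball x₀ r := OpenPartialHomeomorph.univBall_target x₀ hr
    set b := g.symm a with hb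
    have hgb : g b = a := by
      apply g.right_inv
      rw [htgt]; exact ha
    have hginj : InjOn g univ := by rw [← hsrc]; exact g.injOn
    have hgc : Continuous g := by
      have := g.continuousOn
      rw [hsrc] at this
      rwa [← continuousOn_univ]
    have himg : g '' univ = ball x₀ r := by
      rw [← htgt, ← hsrc, g.image_source_eq_target]
    have hkey : ball x₀ r \ {a} = g '' ({b}ᶜ) := by
      apply Subset.antisymm
      · intro y hy
        have hyt : y ∈ g.target := by rw [htgt]; exact hy.1
        refine ⟨g.symm y, ?_, g.right_inv hyt⟩
        intro hc
        simp only [mem_singleton_iff] at hc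
        apply hy.2
        have := congrArg g hc
        rw [g.right_inv hyt, hgb] at this
        simp [this]
      · rintro y ⟨c, hc, rfl⟩
        constructor
        · rw [← himg]; exact mem_image_of_mem _ (mem_univ c)
        · intro h
          simp only [mem_singleton_iff] at h
          apply hc
          rw [← hgb] at h
          exact hginj (mem_univ c) (mem_univ b) h
      
    rw [hkey]
    have hpc : IsPathConnected ({b}ᶜ : Set 𝔼) :=
      isPathConnected_compl_singleton_of_one_lt_rank one_lt_rank_euclidean b
    exact (hpc.isConnected.isPreconnected).image g hgc.continuousOn
  · rw [diff_singleton_eq_self (by simpa using ha)]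
    exact (convex_ball x₀ r).isPreconnected

variable {T : Type*} [TopologicalSpace T] [T2Space T] [ChartedSpace 𝔼 T]

lemma isPreconnected_open_diff_singleton {s : Set T} (hso : IsOpen s) (hsp : IsPreconnected s)
    (a : T) : IsPreconnected (s \ {a}) := by
  by_cases has : a ∈ s
  swap
  · rwa [diff_singleton_eq_self has]
  classical
  set e := chartAt 𝔼 a with he
  have hae : a ∈ e.source := mem_chart_source 𝔼 a
  set s' : Set T := e.source ∩ s with hs'
  have hs'o : IsOpen s' := e.open_source.inter hso
  have has' : a ∈ s' := ⟨hae, has⟩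
  have himg : IsOpen (e '' s') := e.isOpen_image_of_subset_source hs'o inter_subset_left
  obtain ⟨ε, hε, hballsub⟩ := Metric.isOpen_iff.1 himg _ (mem_image_of_mem _ has')
  set r := ε / 2 with hrdef
  have hr : 0 < r := by positivity
  have hsub : ball (e a) r ⊆ e '' s' := (ball_subset_ball (by linarith)).trans hballsub
  have hballt : ball (e a) r ⊆ e.target := by
    intro u hu
    obtain ⟨t, ht, rfl⟩ := hsub hu
    exact e.map_source ht.1
  -- the punctured neighbourhood of `a`
  set B : Set T := e.symm '' ball (e a) r with hB
  have hBo : IsOpen B := e.symm.isOpen_image_of_subset_source isOpen_ball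
    (by rw [OpenPartialHomeomorph.symm_source]; exact hballt)
  have haB : a ∈ B := ⟨e a, mem_ball_self hr, e.left_inv hae⟩
  set N : Set T := e.symm '' (ball (e a) r \ {e a}) with hN
  have hNsub : N ⊆ s \ {a} := by
    rintro t ⟨u, ⟨hu, hu2⟩, rfl⟩
    constructor
    · obtain ⟨t', ht', rfl⟩ := hsub hu
      rw [e.left_inv ht'.1]; exact ht'.2
    · intro h
      simp only [mem_singleton_iff] at h hu2
      apply hu2
      have h2 : e.symm u = e.symm (e a) := by rw [h, e.left_inv hae]
      exact e.symm.injOn (by rw [OpenPartialHomeomorph.symm_source]; exact hballt hu)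
        (by rw [OpenPartialHomeomorph.symm_source]; exact hballt (mem_ball_self hr)) h2
  have hBN : ∀ t ∈ B, t ≠ a → t ∈ N := by
    rintro t ⟨u, hu, rfl⟩ hta
    refine ⟨u, ⟨hu, ?_⟩, rfl⟩
    intro h
    simp only [mem_singleton_iff] at h
    apply hta
    rw [h, e.left_inv hae]
  have hNp : IsPreconnected N :=
    (isPreconnected_ball_diff_singleton (e a) r (e a)).image _
      (e.continuousOn_symm.mono (fun u hu => hballt hu.1))
  -- main argument
  intro u v hu hv hcov ⟨p, hp⟩ ⟨q, hq⟩
  by_contra hemp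
  rw [not_nonempty_iff_eq_empty] at hemp
  -- replace u, v by u \ {a}, v \ {a}
  have hacl : IsClosed ({a} : Set T) := isClosed_singleton
  -- key symmetric claim
  have main : ∀ u' v' : Set T, IsOpen u' → IsOpen v' → (s \ {a}) ⊆ u' ∪ v' →
      ((s \ {a}) ∩ (u' ∩ v') = ∅) → a ∉ u' → a ∉ v' →
      ((s \ {a}) ∩ u').Nonempty → ((s \ {a}) ∩ v').Nonempty → N ⊆ u' → False := by
    intro u' v' hu' hv' hcov' hemp' hau' hav' ⟨p', hp'⟩ ⟨q', hq'⟩ hNu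
    set U2 := u' ∪ B with hU2
    have hU2o : IsOpen U2 := hu'.union hBo
    have hcov2 : s ⊆ U2 ∪ v' := by
      intro t ht
      by_cases hta : t = a
      · exact Or.inl (Or.inr (hta ▸ haB))
      · rcases hcov' ⟨ht, hta⟩ with h | h
        · exact Or.inl (Or.inl h)
        · exact Or.inr h
    have hint2 : s ∩ (U2 ∩ v') = ∅ := by
      rw [eq_empty_iff_forall_notMem]
      rintro t ⟨hts, htu, htv⟩
      have hta : t ≠ a := fun h => hav' (h ▸ htv)
      rcases htu with h | h
      · have hmem : t ∈ (s \ {a}) ∩ (u' ∩ v') := ⟨⟨hts, hta⟩, h, htv⟩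
        rw [hemp'] at hmem; exact hmem
      · have hN2 : t ∈ N := hBN t h hta
        have hmem : t ∈ (s \ {a}) ∩ (u' ∩ v') := ⟨⟨hts, hta⟩, hNu hN2, htv⟩
        rw [hemp'] at hmem; exact hmem
    have := hsp U2 v' hU2o hv' hcov2 ⟨p', hp'.1.1, Or.inl hp'.2⟩ ⟨q', hq'.1.1, hq'.2⟩
    rw [hint2] at this
    exact this.ne_empty rfl
  -- apply with u \ {a}, v \ {a}
  set u' := u \ {a} with hu'
  set v' := v \ {a} with hv'
  have hu'o : IsOpen u' := hu.sdiff hacl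
  have hv'o : IsOpen v' := hv.sdiff hacl
  have hcov' : (s \ {a}) ⊆ u' ∪ v' := by
    rintro t ⟨hts, hta⟩
    simp only [mem_singleton_iff] at hta
    rcases hcov ⟨hts, hta⟩ with h | h
    · exact Or.inl ⟨h, hta⟩
    · exact Or.inr ⟨h, hta⟩
  have hemp' : (s \ {a}) ∩ (u' ∩ v') = ∅ := by
    rw [eq_empty_iff_forall_notMem]
    rintro t ⟨hts, htu, htv⟩
    have hmem : t ∈ (s \ {a}) ∩ (u ∩ v) := ⟨hts, htu.1, htv.1⟩
    rw [hemp] at hmem; exact hmem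
  have hp' : ((s \ {a}) ∩ u').Nonempty := ⟨p, hp.1, hp.2, hp.1.2⟩
  have hq' : ((s \ {a}) ∩ v').Nonempty := ⟨q, hq.1, hq.2, hq.1.2⟩
  have hNcov : N ⊆ u' ∪ v' := hNsub.trans hcov'
  -- N is contained in u' or v'
  have hNone : N ⊆ u' ∨ N ⊆ v' := by
    rcases (N ∩ u').eq_empty_or_nonempty with h | h
    · right
      intro t ht
      rcases hNcov ht with h' | h'
      · have hmem : t ∈ N ∩ u' := ⟨ht, h'⟩
        rw [h] at hmem; exact hmem.elim
      · exact h'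
    · rcases (N ∩ v').eq_empty_or_nonempty with h2 | h2
      · left
        intro t ht
        rcases hNcov ht with h' | h'
        · exact h'
        · have hmem : t ∈ N ∩ v' := ⟨ht, h'⟩
          rw [h2] at hmem; exact hmem.elim
      · have := hNp u' v' hu'o hv'o hNcov h h2
        obtain ⟨t, ht⟩ := this
        have hmem : t ∈ (s \ {a}) ∩ (u' ∩ v') := ⟨hNsub ht.1, ht.2⟩
        rw [hemp'] at hmem; exact hmem.elim
  rcases hNone with h | h
  · exact main u' v' hu'o hv'o hcov' hemp' (fun hc => hc.2 rfl) (fun hc => hc.2 rfl) hp' hq' h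
  · apply main v' u' hv'o hu'o (by rwa [union_comm]) (by rwa [inter_comm v' u'])
      (fun hc => hc.2 rfl) (fun hc => hc.2 rfl) hq' hp' h

lemma isPreconnected_compl_finite [ConnectedSpace T] {F : Set T} (hF : F.Finite) :
    IsPreconnected (Fᶜ : Set T) := by
  refine Set.Finite.induction_on (motive := fun s _ => IsPreconnected (sᶜ : Set T)) F hF ?_ ?_
  · show IsPreconnected (∅ᶜ : Set T)
    rw [Set.compl_empty]; exact isPreconnected_univ
  · intro a F' haF hF' ih
    show IsPreconnected ((insert a F')ᶜ : Set T)
    have : ((insert a F')ᶜ : Set T) = F'ᶜ \ {a} := by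
      ext t; simp [Set.mem_insert_iff, and_comm, not_or]
    rw [this]
    exact isPreconnected_open_diff_singleton hF'.isClosed.isOpen_compl ih a

end Connectivity
section Transitivity

open Set

local notation "𝔼" => EuclideanSpace ℝ (Fin 2)

variable {T : Type*} [TopologicalSpace T] [T2Space T] [ChartedSpace 𝔼 T]

lemma Homeomorph.fix_symm {h : T ≃ₜ T} {t : T} (ht : h t = t) : h.symm t = t := by
  conv_lhs => rw [← ht]
  exact h.symm_apply_apply t

lemma exists_homeo_of_open_preconnected {Ω : Set T} (hΩo : IsOpen Ω) (hΩp : IsPreconnected Ω)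
    {x y : T} (hx : x ∈ Ω) (hy : y ∈ Ω) :
    ∃ h : T ≃ₜ T, (∀ t ∉ Ω, h t = t) ∧ h x = y := by
  classical
  set rel : T → Prop := fun b => ∃ h : T ≃ₜ T, (∀ t ∉ Ω, h t = t) ∧ h x = b with hrel
  set C : Set T := {b | b ∈ Ω ∧ rel b} with hC
  set D : Set T := {b | b ∈ Ω ∧ ¬ rel b} with hD
  have key : ∀ y0 ∈ Ω, ∃ V : Set T, IsOpen V ∧ y0 ∈ V ∧ V ⊆ Ω ∧
      ∀ y ∈ V, ∃ g : T ≃ₜ T, (∀ t ∉ Ω, g t = t) ∧ g y0 = y ∧ g.symm y = y0 := by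
    intro y0 hy0
    obtain ⟨V, hVo, hyV, hVΩ, Γ, hΓbase, hΓsupp, _, _⟩ :=
      exists_local_homeo_family y0 Ω hΩo hy0
    refine ⟨V, hVo, hyV, hVΩ, fun y hyV' => ?_⟩
    have hb : Γ ⟨y, hyV'⟩ y0 = y := hΓbase ⟨y, hyV'⟩
    refine ⟨Γ ⟨y, hyV'⟩, fun t ht => hΓsupp ⟨y, hyV'⟩ t ht, hb, ?_⟩
    have h2 := congrArg (Γ ⟨y, hyV'⟩).symm hb
    rw [Homeomorph.symm_apply_apply] at h2
    exact h2.symm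
  have hCo : IsOpen C := by
    rw [isOpen_iff_forall_mem_open]
    rintro y0 ⟨hy0Ω, h0, hsupp0, hx0⟩
    obtain ⟨V, hVo, hyV, hVΩ, hV⟩ := key y0 hy0Ω
    refine ⟨V, fun y hyV' => ⟨hVΩ hyV', ?_⟩, hVo, hyV⟩
    obtain ⟨g, hgsupp, hgy0, _⟩ := hV y hyV'
    exact ⟨h0.trans g, fun t ht => by simp [Homeomorph.trans_apply, hsupp0 t ht, hgsupp t ht],
      by simp [Homeomorph.trans_apply, hx0, hgy0]⟩
  have hDo : IsOpen D := by
    rw [isOpen_iff_forall_mem_open]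
    rintro y0 ⟨hy0Ω, hn⟩
    obtain ⟨V, hVo, hyV, hVΩ, hV⟩ := key y0 hy0Ω
    refine ⟨V, fun y hyV' => ⟨hVΩ hyV', fun hrely => hn ?_⟩, hVo, hyV⟩
    obtain ⟨h0, hsupp0, hx0⟩ := hrely
    obtain ⟨g, hgsupp, _, hgy⟩ := hV y hyV'
    exact ⟨h0.trans g.symm,
      fun t ht => by simp [Homeomorph.trans_apply, hsupp0 t ht, Homeomorph.fix_symm (hgsupp t ht)],
      by simp [Homeomorph.trans_apply, hx0, hgy]⟩
  have hxC : x ∈ C := ⟨hx, Homeomorph.refl T, fun t _ => rfl, rfl⟩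
  by_cases hyC : y ∈ C
  · exact hyC.2
  · exfalso
    have hyD : y ∈ D := ⟨hy, fun h => hyC ⟨hy, h⟩⟩
    have hcov : Ω ⊆ C ∪ D := by
      intro t ht
      by_cases h : rel t
      · exact Or.inl ⟨ht, h⟩
      · exact Or.inr ⟨ht, h⟩
    obtain ⟨t, _, htC, htD⟩ := hΩp C D hCo hDo hcov ⟨x, hx, hxC⟩ ⟨y, hy, hyD⟩
    exact htD.2 htC.2

lemma exists_homeo_multi [ConnectedSpace T] {F : Set T} (hF : F.Finite)
    (m : ℕ) (p q : Fin m → T) (hp : Function.Injective p) (hq : Function.Injective q)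
    (hpF : ∀ i, p i ∉ F) (hqF : ∀ i, q i ∉ F) :
    ∃ h : T ≃ₜ T, (∀ t ∈ F, h t = t) ∧ ∀ i, h (p i) = q i := by
  induction m with
  | zero => exact ⟨Homeomorph.refl T, fun t _ => rfl, fun i => i.elim0⟩
  | succ m ih =>
    obtain ⟨h', hsupp', happ'⟩ := ih (p ∘ Fin.castSucc) (q ∘ Fin.castSucc)
      (hp.comp (Fin.castSucc_injective m)) (hq.comp (Fin.castSucc_injective m))
      (fun i => hpF _) (fun i => hqF _)
    set F2 : Set T := F ∪ (range fun i : Fin m => q (Fin.castSucc i)) with hF2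
    have hF2f : F2.Finite := hF.union (finite_range _)
    have hΩ2o : IsOpen (F2ᶜ : Set T) := hF2f.isClosed.isOpen_compl
    have hΩ2p : IsPreconnected (F2ᶜ : Set T) := isPreconnected_compl_finite hF2f
    have hinj : Function.Injective h' := h'.injective
    have hmapsF : ∀ t, t ∉ F → h' t ∉ F := by
      intro t ht hc
      have : h' (h' t) = h' t := hsupp' _ hc
      exact ht (by rwa [← hinj this])
    have haΩ : h' (p (Fin.last m)) ∈ (F2ᶜ : Set T) := by
      intro hc
      rcases hc with hc | hc
      · exact hmapsF _ (hpF _) hc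
      · obtain ⟨i, hi⟩ := hc
        have h3 : h' (p (Fin.castSucc i)) = q (Fin.castSucc i) := happ' i
        have hi : q (Fin.castSucc i) = h' (p (Fin.last m)) := hi
        rw [← h3] at hi
        have := hp (hinj hi)
        simp only [Fin.ext_iff, Fin.val_last, Fin.coe_castSucc] at this
        omega
    have hbΩ : q (Fin.last m) ∈ (F2ᶜ : Set T) := by
      intro hc
      rcases hc with hc | hc
      · exact hqF _ hc
      · obtain ⟨i, hi⟩ := hc
        have := hq hi
        simp only [Fin.ext_iff, Fin.val_last, Fin.coe_castSucc] at this
        omega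
    obtain ⟨g, hgsupp, hgab⟩ := exists_homeo_of_open_preconnected hΩ2o hΩ2p haΩ hbΩ
    refine ⟨h'.trans g, ?_, ?_⟩
    · intro t ht
      have h1 : h' t = t := hsupp' t ht
      have h2 : g t = t := hgsupp t (by simp [hF2]; tauto)
      simp [Homeomorph.trans_apply, h1, h2]
    · intro i
      refine Fin.lastCases ?_ ?_ i
      · show g (h' (p (Fin.last m))) = q (Fin.last m)
        exact hgab
      · intro j
        have h1 : h' (p (Fin.castSucc j)) = q (Fin.castSucc j) := happ' j
        
        have h2 : g (q (Fin.castSucc j)) = q (Fin.castSucc j) := by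
          apply hgsupp
          intro hc
          exact hc (Or.inr ⟨j, rfl⟩)
        simp [Homeomorph.trans_apply, h1, h2]

end Transitivity
section Helpers

open Set

variable {X : Type*} [TopologicalSpace X]

/-- Pairwise disjoint open neighbourhoods of finitely many distinct points in a T2 space. -/
lemma exists_disjoint_opens [T2Space X] {n : ℕ} (x : Fin n → X) (hx : Function.Injective x) :
    ∃ U : Fin n → Set X, (∀ i, IsOpen (U i)) ∧ (∀ i, x i ∈ U i) ∧
      ∀ i j, i ≠ j → Disjoint (U i) (U j) := by
  classical
  have H : ∀ i j : Fin n, i ≠ j → ∃ uv : Set X × Set X, IsOpen uv.1 ∧ IsOpen uv.2 ∧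
      x i ∈ uv.1 ∧ x j ∈ uv.2 ∧ Disjoint uv.1 uv.2 := by
    intro i j hij
    obtain ⟨u, v, hu, hv, hxu, hxv, huv⟩ := t2_separation (hx.ne hij)
    exact ⟨(u, v), hu, hv, hxu, hxv, huv⟩
  set uv : ∀ _ : Fin n, ∀ _ : Fin n, Set X × Set X := fun i j =>
    if h : i ≠ j then (H i j h).choose else (univ, univ) with huv
  have spec : ∀ i j (h : i ≠ j), IsOpen (uv i j).1 ∧ IsOpen (uv i j).2 ∧
      x i ∈ (uv i j).1 ∧ x j ∈ (uv i j).2 ∧ Disjoint (uv i j).1 (uv i j).2 := by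
    intro i j h
    simp only [huv, dif_pos h]
    exact (H i j h).choose_spec
  set W : Fin n → Fin n → Set X := fun i j =>
    if i = j then univ else (uv i j).1 ∩ (uv j i).2 with hW
  refine ⟨fun i => ⋂ j, W i j, ?_, ?_, ?_⟩
  · intro i
    apply isOpen_iInter_of_finite
    intro j
    by_cases h : i = j
    · simp [hW, h]
    · simp only [hW, if_neg h]
      exact ((spec i j (Ne.symm (fun e => h e.symm))).1).inter ((spec j i fun e => h e.symm).2.1)
  · intro i
    apply mem_iInter.2
    intro j
    by_cases h : i = j
    · simp [hW, h]
    · simp only [hW, if_neg h]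
      exact ⟨(spec i j h).2.2.1, (spec j i (fun e => h e.symm)).2.2.2.1⟩
  · intro i j hij
    have h1 : (⋂ m, W i m) ⊆ (uv i j).1 := by
      intro t ht
      have := mem_iInter.1 ht j
      simp only [hW, if_neg hij] at this
      exact this.1
    have h2 : (⋂ m, W j m) ⊆ (uv i j).2 := by
      intro t ht
      have := mem_iInter.1 ht i
      simp only [hW, if_neg (Ne.symm hij)] at this
      exact this.2
    exact Set.disjoint_of_subset h1 h2 (spec i j hij).2.2.2.2

/-- Iterated composition of a finite family of homeomorphisms. -/
def compFam {n : ℕ} (f : Fin n → (X ≃ₜ X)) : ℕ → X ≃ₜ X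
  | 0 => Homeomorph.refl X
  | (m+1) => if h : m < n then (compFam f m).trans (f ⟨m, h⟩) else compFam f m

lemma compFam_fix {n : ℕ} (f : Fin n → (X ≃ₜ X)) (t : X) (hf : ∀ i, f i t = t) :
    ∀ m, compFam f m t = t := by
  intro m
  induction m with
  | zero => rfl
  | succ m ih =>
    by_cases h : m < n
    · simp only [compFam, dif_pos h, Homeomorph.trans_apply, ih, hf]
    · simp only [compFam, dif_neg h, ih]

lemma compFam_apply {n : ℕ} (f : Fin n → (X ≃ₜ X)) (j : Fin n) (t : X)
    (hpre : ∀ i : Fin n, (i : ℕ) < (j : ℕ) → f i t = t)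
    (hpost : ∀ i : Fin n, (j : ℕ) < (i : ℕ) → f i (f j t) = f j t) :
    ∀ m, ((j : ℕ) < m → compFam f m t = f j t) ∧ (m ≤ (j : ℕ) → compFam f m t = t) := by
  intro m
  induction m with
  | zero => exact ⟨fun h => absurd h (by omega), fun _ => rfl⟩
  | succ m ih =>
    by_cases h : m < n
    · constructor
      · intro hjm
        simp only [compFam, dif_pos h, Homeomorph.trans_apply]
        rcases lt_trichotomy (j : ℕ) m with hc | hc | hc
        · rw [ih.1 hc]
          exact hpost ⟨m, h⟩ hc
        · have hjeq : j = ⟨m, h⟩ := by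
            apply Fin.ext; simp [hc]
          rw [ih.2 (by omega), hjeq]
        · omega
      · intro hjm
        simp only [compFam, dif_pos h, Homeomorph.trans_apply]
        rw [ih.2 (by omega)]
        exact hpre ⟨m, h⟩ (by simpa using by omega)
    · have hjm : (j : ℕ) < m := by
        have := j.2; omega
      constructor
      · intro _
        simp only [compFam, dif_neg h]
        exact ih.1 hjm
      · intro hc
        omega

variable {Y : Type*} [TopologicalSpace Y] [LocallyCompactSpace X]

lemma compFam_continuous {n : ℕ} (f : Y → Fin n → (X ≃ₜ X))
    (hf : ∀ i, Continuous fun y => ((f y i : X ≃ₜ X) : C(X, X))) (m : ℕ) :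
    Continuous fun y => ((compFam (f y) m : X ≃ₜ X) : C(X, X)) := by
  induction m with
  | zero =>
    show Continuous fun _ : Y => ((Homeomorph.refl X : X ≃ₜ X) : C(X, X))
    exact continuous_const
  | succ m ih =>
    by_cases h : m < n
    · have heq : (fun y => ((compFam (f y) (m+1) : X ≃ₜ X) : C(X, X)))
        = fun y => ((f y ⟨m, h⟩ : X ≃ₜ X) : C(X, X)).comp
            ((compFam (f y) m : X ≃ₜ X) : C(X, X)) := by
        funext y
        ext t
        simp [compFam, dif_pos h, Homeomorph.trans_apply]
      rw [heq]
      exact Continuous.compCM (hf _) ih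
    · have heq : (fun y => ((compFam (f y) (m+1) : X ≃ₜ X) : C(X, X)))
        = fun y => ((compFam (f y) m : X ≃ₜ X) : C(X, X)) := by
        funext y
        ext t
        simp [compFam, dif_neg h]
      rw [heq]
      exact ih

lemma compFam_symm_continuous {n : ℕ} (f : Y → Fin n → (X ≃ₜ X))
    (hf : ∀ i, Continuous fun y => (((f y i).symm : X ≃ₜ X) : C(X, X))) (m : ℕ) :
    Continuous fun y => (((compFam (f y) m).symm : X ≃ₜ X) : C(X, X)) := by
  induction m with
  | zero =>
    show Continuous fun _ : Y => (((Homeomorph.refl X).symm : X ≃ₜ X) : C(X, X))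
    exact continuous_const
  | succ m ih =>
    by_cases h : m < n
    · have heq : (fun y => (((compFam (f y) (m+1)).symm : X ≃ₜ X) : C(X, X)))
        = fun y => (((compFam (f y) m).symm : X ≃ₜ X) : C(X, X)).comp
            (((f y ⟨m, h⟩).symm : X ≃ₜ X) : C(X, X)) := by
        funext y
        ext t
        simp [compFam, dif_pos h]
      rw [heq]
      exact Continuous.compCM ih (hf _)
    · have heq : (fun y => (((compFam (f y) (m+1)).symm : X ≃ₜ X) : C(X, X)))
        = fun y => (((compFam (f y) m).symm : X ≃ₜ X) : C(X, X)) := by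
        funext y
        ext t
        simp [compFam, dif_neg h]
      rw [heq]
      exact ih

end Helpers
open Set in
theorem evaluation_map_is_locally_trivial_fibering
    {T : Type*} [TopologicalSpace T] [T2Space T] [CompactSpace T] [ConnectedSpace T]
    [Nonempty T] [ChartedSpace (EuclideanSpace ℝ (Fin 2)) T]
    (k n : ℕ) (hn : 1 ≤ n) (z : Fin (k + n) → T) (hz : Function.Injective z) :
    ∃ ε : {h : T ≃ₜ T // ∀ i : Fin (k + n), (i : ℕ) < k → h (z i) = z i} →
        Conf n {x : T // ∀ i : Fin (k + n), (i : ℕ) < k → x ≠ z i},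
      (∀ h j, (((ε h).1 j : {x : T // ∀ i : Fin (k + n), (i : ℕ) < k → x ≠ z i}) : T) =
          h.1 (z (Fin.natAdd k j))) ∧
      Continuous ε ∧
      Function.Surjective ε ∧
      ∀ p : Conf n {x : T // ∀ i : Fin (k + n), (i : ℕ) < k → x ≠ z i},
        ∃ U : Set (Conf n {x : T // ∀ i : Fin (k + n), (i : ℕ) < k → x ≠ z i}),
          IsOpen U ∧ p ∈ U ∧
          ∃ φ : {h : {h : T ≃ₜ T // ∀ i : Fin (k + n), (i : ℕ) < k → h (z i) = z i} //
                  ε h ∈ U} ≃ₜ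
              U × {h : T ≃ₜ T // ∀ i : Fin (k + n), h (z i) = z i},
            ∀ h, ((φ h).1 : Conf n {x : T // ∀ i : Fin (k + n), (i : ℕ) < k → x ≠ z i}) =
              ε h.1 := by
  classical
  -- abbreviations
  set X := {x : T // ∀ i : Fin (k + n), (i : ℕ) < k → x ≠ z i} with hX
  set Fk := {h : T ≃ₜ T // ∀ i : Fin (k + n), (i : ℕ) < k → h (z i) = z i} with hFk
  set Fkn := {h : T ≃ₜ T // ∀ i : Fin (k + n), h (z i) = z i} with hFkn
  -- the set of marked points
  set F : Set T := z '' {i : Fin (k + n) | (i : ℕ) < k} with hFdef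
  have hFfin : F.Finite := (Set.toFinite _).image z
  -- injectivity facts
  have hnatAdd : ∀ j : Fin n, ((Fin.natAdd k j : Fin (k + n)) : ℕ) = k + j := fun j => rfl
  have hne : ∀ (h : T ≃ₜ T), (∀ i : Fin (k + n), (i : ℕ) < k → h (z i) = z i) →
      ∀ (j : Fin n) (i : Fin (k + n)), (i : ℕ) < k → h (z (Fin.natAdd k j)) ≠ z i := by
    intro h hfix j i hik heq
    rw [← hfix i hik] at heq
    have h1 := congrArg Fin.val (hz (h.injective heq))
    rw [hnatAdd] at h1
    omega
  -- the evaluation map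
  set ε : Fk → Conf n X := fun h =>
    ⟨fun j => ⟨h.1 (z (Fin.natAdd k j)), fun i hik => hne h.1 h.2 j i hik⟩, by
      intro j j' hjj'
      have h1 : h.1 (z (Fin.natAdd k j)) = h.1 (z (Fin.natAdd k j')) :=
        congrArg Subtype.val hjj'
      have h2 := congrArg Fin.val (hz (h.1.injective h1))
      rw [hnatAdd, hnatAdd] at h2
      exact Fin.ext (by omega)⟩ with hεdef
  -- continuity of the coercion to C(T,T)
  have hcoe : Continuous fun h : T ≃ₜ T => (h : C(T, T)) := continuous_induced_dom
  -- continuity of ε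
  have hεc : Continuous ε := by
    apply Continuous.subtype_mk
    apply continuous_pi
    intro j
    apply Continuous.subtype_mk
    have hc1 : Continuous fun h : Fk => ((h.1 : T ≃ₜ T) : C(T, T)) :=
      hcoe.comp continuous_subtype_val
    show Continuous fun h : Fk => (((h.1 : T ≃ₜ T) : C(T, T)) (z (Fin.natAdd k j)))
    exact (continuous_eval_const (z (Fin.natAdd k j))).comp hc1
  -- surjectivity of ε
  have hsurj : Function.Surjective ε := by
    intro f
    have hpinj : Function.Injective fun j : Fin n => z (Fin.natAdd k j) := by
      intro j j' e
      have h2 := congrArg Fin.val (hz e)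
      rw [hnatAdd, hnatAdd] at h2
      exact Fin.ext (by omega)
    have hqinj : Function.Injective fun j : Fin n => ((f.1 j : X) : T) := by
      intro j j' e
      exact f.2 (Subtype.ext e)
    have hpF : ∀ j : Fin n, z (Fin.natAdd k j) ∉ F := by
      rintro j ⟨i, hik, heq⟩
      have h2 := congrArg Fin.val (hz heq)
      rw [hnatAdd] at h2
      simp only [mem_setOf_eq] at hik
      omega
    have hqF : ∀ j : Fin n, ((f.1 j : X) : T) ∉ F := by
      rintro j ⟨i, hik, heq⟩
      exact (f.1 j).2 i hik heq.symm
    obtain ⟨h, hfixF, happ⟩ := exists_homeo_multi hFfin n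
      (fun j => z (Fin.natAdd k j)) (fun j => ((f.1 j : X) : T)) hpinj hqinj hpF hqF
    refine ⟨⟨h, fun i hik => hfixF (z i) ⟨i, hik, rfl⟩⟩, ?_⟩
    apply Subtype.ext
    funext j
    apply Subtype.ext
    exact happ j
  refine ⟨ε, fun h j => rfl, hεc, hsurj, ?_⟩
  -- local triviality
  intro p
  set pt : Fin n → T := fun j => ((p.1 j : X) : T) with hpt
  have hptinj : Function.Injective pt := by
    intro j j' e
    exact p.2 (Subtype.ext e)
  obtain ⟨U0, hU0o, hU0m, hU0d⟩ := exists_disjoint_opens pt hptinj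
  set W : Fin n → Set T := fun j => U0 j ∩ Fᶜ with hW
  have hWo : ∀ j, IsOpen (W j) := fun j => (hU0o j).inter hFfin.isClosed.isOpen_compl
  have hWm : ∀ j, pt j ∈ W j := by
    intro j
    refine ⟨hU0m j, ?_⟩
    rintro ⟨i, hik, heq⟩
    exact (p.1 j).2 i hik heq.symm
  have hWd : ∀ i j, i ≠ j → Disjoint (W i) (W j) :=
    fun i j hij => (hU0d i j hij).mono inter_subset_left inter_subset_left
  have hWF : ∀ (j : Fin n) (i : Fin (k + n)), (i : ℕ) < k → z i ∉ W j := by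
    intro j i hik ⟨_, hc⟩
    exact hc ⟨i, hik, rfl⟩
  -- local families at each point
  have hloc : ∀ j : Fin n, ∃ V : Set T, IsOpen V ∧ pt j ∈ V ∧ V ⊆ W j ∧
      ∃ Γ : V → (T ≃ₜ T),
        (∀ y, Γ y (pt j) = y.1) ∧
        (∀ y t, t ∉ W j → Γ y t = t) ∧
        Continuous (fun y => ((Γ y : T ≃ₜ T) : C(T, T))) ∧
        Continuous (fun y => (((Γ y).symm : T ≃ₜ T) : C(T, T))) :=
    fun j => exists_local_homeo_family (pt j) (W j) (hWo j) (hWm j)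
  choose V hVo hVm hVW Γ hΓbase hΓsupp hΓcont hΓscont using hloc
  -- the neighbourhood U
  set U : Set (Conf n X) := {q | ∀ j, ((q.1 j : X) : T) ∈ V j} with hU
  have hUo : IsOpen U := by
    have hUeq : U = ⋂ j, (fun q : Conf n X => ((q.1 j : X) : T)) ⁻¹' (V j) := by
      ext q
      simp [hU, mem_iInter]
    rw [hUeq]
    apply isOpen_iInter_of_finite
    intro j
    exact (hVo j).preimage
      (continuous_subtype_val.comp ((continuous_apply j).comp continuous_subtype_val))
  have hpU : p ∈ U := fun j => hVm j
  -- the spreading family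
  set fam : ↥U → Fin n → (T ≃ₜ T) := fun q j => Γ j ⟨((q.1.1 j : X) : T), q.2 j⟩ with hfam
  set Gam : ↥U → (T ≃ₜ T) := fun q => compFam (fam q) n with hGam
  have hqvW : ∀ (q : ↥U) (j : Fin n), ((q.1.1 j : X) : T) ∈ W j := fun q j => hVW j (q.2 j)
  have hfambase : ∀ (q : ↥U) (j : Fin n), fam q j (pt j) = ((q.1.1 j : X) : T) :=
    fun q j => hΓbase j _
  have hfamsupp : ∀ (q : ↥U) (j : Fin n) (t : T), t ∉ W j → fam q j t = t :=
    fun q j t ht => hΓsupp j _ t ht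
  have hGam_fixz : ∀ (q : ↥U) (i : Fin (k + n)), (i : ℕ) < k → Gam q (z i) = z i := by
    intro q i hik
    exact compFam_fix _ _ (fun j => hfamsupp q j _ (hWF j i hik)) n
  have hGam_pt : ∀ (q : ↥U) (j : Fin n), Gam q (pt j) = ((q.1.1 j : X) : T) := by
    intro q j
    have hpre : ∀ i : Fin n, (i : ℕ) < (j : ℕ) → fam q i (pt j) = pt j := by
      intro i hij
      apply hfamsupp
      intro hc
      exact (hWd i j (fun e => by rw [e] at hij; omega)).ne_of_mem hc (hWm j) rfl
    have hpost : ∀ i : Fin n, (j : ℕ) < (i : ℕ) →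
        fam q i (fam q j (pt j)) = fam q j (pt j) := by
      intro i hij
      rw [hfambase]
      apply hfamsupp
      intro hc
      exact (hWd i j (fun e => by rw [e] at hij; omega)).ne_of_mem hc (hqvW q j) rfl
    have := (compFam_apply (fam q) j (pt j) hpre hpost n).1 j.2
    rw [this, hfambase]
  -- continuity of the spreading family
  have hGamc : Continuous fun q : ↥U => ((Gam q : T ≃ₜ T) : C(T, T)) := by
    apply compFam_continuous
    intro j
    exact (hΓcont j).comp
      ((continuous_subtype_val.comp ((continuous_apply j).comp
        (continuous_subtype_val.comp continuous_subtype_val))).subtype_mk _)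
  have hGamsc : Continuous fun q : ↥U => (((Gam q).symm : T ≃ₜ T) : C(T, T)) := by
    apply compFam_symm_continuous
    intro j
    exact (hΓscont j).comp
      ((continuous_subtype_val.comp ((continuous_apply j).comp
        (continuous_subtype_val.comp continuous_subtype_val))).subtype_mk _)
  -- a base point of the fibre over p
  obtain ⟨h₀, hh₀⟩ := hsurj p
  have hh₀pt : ∀ j : Fin n, h₀.1 (z (Fin.natAdd k j)) = pt j := by
    intro j
    exact congrArg (fun q : Conf n X => ((q.1 j : X) : T)) hh₀
  -- forward map
  have hΦpf : ∀ h : {h : Fk // ε h ∈ U}, ∀ i : Fin (k + n),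
      ((h.1.1.trans (Gam ⟨ε h.1, h.2⟩).symm).trans h₀.1.symm) (z i) = z i := by
    intro h i
    simp only [Homeomorph.trans_apply]
    by_cases hik : (i : ℕ) < k
    · rw [h.1.2 i hik, Homeomorph.fix_symm (hGam_fixz ⟨ε h.1, h.2⟩ i hik),
        Homeomorph.fix_symm (h₀.2 i hik)]
    · have hikn : (i : ℕ) < k + n := i.2
      obtain ⟨j, hi⟩ : ∃ j : Fin n, Fin.natAdd k j = i :=
        ⟨⟨(i : ℕ) - k, by omega⟩, Fin.ext (by simp only [Fin.natAdd]; try omega)⟩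
      have e1 : h.1.1 (z i) = ((ε h.1).1 j : X) := by rw [← hi]
      have e2 : (Gam ⟨ε h.1, h.2⟩).symm (((ε h.1).1 j : X) : T) = pt j := by
        have := hGam_pt ⟨ε h.1, h.2⟩ j
        have h3 := congrArg (Gam ⟨ε h.1, h.2⟩).symm this
        rw [Homeomorph.symm_apply_apply] at h3
        exact h3.symm
      have e3 : h₀.1.symm (pt j) = z i := by
        have := congrArg h₀.1.symm (hh₀pt j)
        rw [Homeomorph.symm_apply_apply, hi] at this
        exact this.symm
      rw [e1, e2, e3]
  set Φ : {h : Fk // ε h ∈ U} → ↥U × Fkn := fun h =>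
    (⟨ε h.1, h.2⟩, ⟨(h.1.1.trans (Gam ⟨ε h.1, h.2⟩).symm).trans h₀.1.symm, hΦpf h⟩) with hΦ
  -- backward map
  set Ψinner : ↥U × Fkn → (T ≃ₜ T) := fun ug => (ug.2.1.trans h₀.1).trans (Gam ug.1)
    with hΨinner
  have hΨfix : ∀ (ug : ↥U × Fkn) (i : Fin (k + n)), (i : ℕ) < k → Ψinner ug (z i) = z i := by
    intro ug i hik
    simp only [hΨinner, Homeomorph.trans_apply]
    rw [ug.2.2 i, h₀.2 i hik, hGam_fixz ug.1 i hik]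
  have hΨε : ∀ ug : ↥U × Fkn, ε ⟨Ψinner ug, fun i hik => hΨfix ug i hik⟩ = ug.1.1 := by
    intro ug
    apply Subtype.ext
    funext j
    apply Subtype.ext
    show Ψinner ug (z (Fin.natAdd k j)) = ((ug.1.1.1 j : X) : T)
    simp only [hΨinner, Homeomorph.trans_apply]
    rw [ug.2.2 (Fin.natAdd k j), hh₀pt j, hGam_pt ug.1 j]
  set Ψ : ↥U × Fkn → {h : Fk // ε h ∈ U} := fun ug =>
    ⟨⟨Ψinner ug, fun i hik => hΨfix ug i hik⟩, by
      show ε ⟨Ψinner ug, fun i hik => hΨfix ug i hik⟩ ∈ U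
      rw [hΨε]
      exact ug.1.2⟩ with hΨ
  -- the two maps are inverse to each other
  have hleft : Function.LeftInverse Ψ Φ := by
    intro h
    apply Subtype.ext
    apply Subtype.ext
    apply Homeomorph.ext
    intro t
    show Gam ⟨ε h.1, h.2⟩ (h₀.1 (h₀.1.symm ((Gam ⟨ε h.1, h.2⟩).symm (h.1.1 t)))) = h.1.1 t
    rw [Homeomorph.apply_symm_apply, Homeomorph.apply_symm_apply]
  have hright : Function.RightInverse Ψ Φ := by
    intro ug
    have h1 : (⟨ε (Ψ ug).1, (Ψ ug).2⟩ : ↥U) = ug.1 := Subtype.ext (hΨε ug)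
    have h2 : (Φ (Ψ ug)).2 = ug.2 := by
      apply Subtype.ext
      show ((Ψ ug).1.1.trans (Gam ⟨ε (Ψ ug).1, (Ψ ug).2⟩).symm).trans h₀.1.symm = ug.2.1
      rw [h1]
      apply Homeomorph.ext
      intro t
      show h₀.1.symm ((Gam ug.1).symm (Gam ug.1 (h₀.1 (ug.2.1 t)))) = ug.2.1 t
      rw [Homeomorph.symm_apply_apply, Homeomorph.symm_apply_apply]
    have h3 : (Φ (Ψ ug)).1 = ug.1 := h1
    exact Prod.ext h3 h2
  -- continuity of Φ
  have hfirstc : Continuous fun h : {h : Fk // ε h ∈ U} => (⟨ε h.1, h.2⟩ : ↥U) :=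
    (hεc.comp continuous_subtype_val).subtype_mk _
  have hcoeD : Continuous fun h : {h : Fk // ε h ∈ U} => ((h.1.1 : T ≃ₜ T) : C(T, T)) :=
    hcoe.comp (continuous_subtype_val.comp continuous_subtype_val)
  have hΦc : Continuous Φ := by
    apply Continuous.prodMk
    · exact hfirstc
    · apply Continuous.subtype_mk
      apply continuous_induced_rng.2
      show Continuous fun h : {h : Fk // ε h ∈ U} =>
        (((h.1.1.trans (Gam ⟨ε h.1, h.2⟩).symm).trans h₀.1.symm : T ≃ₜ T) : C(T, T))
      have heq : (fun h : {h : Fk // ε h ∈ U} =>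
          (((h.1.1.trans (Gam ⟨ε h.1, h.2⟩).symm).trans h₀.1.symm : T ≃ₜ T) : C(T, T)))
          = fun h : {h : Fk // ε h ∈ U} =>
            ((h₀.1.symm : T ≃ₜ T) : C(T, T)).comp
              ((((Gam ⟨ε h.1, h.2⟩).symm : T ≃ₜ T) : C(T, T)).comp
                ((h.1.1 : T ≃ₜ T) : C(T, T))) := by
        funext h
        ext t
        rfl
      rw [heq]
      exact Continuous.compCM continuous_const
        (Continuous.compCM (hGamsc.comp hfirstc) hcoeD)
  -- continuity of Ψ
  have hΨc : Continuous Ψ := by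
    apply Continuous.subtype_mk
    apply Continuous.subtype_mk
    apply continuous_induced_rng.2
    show Continuous fun ug : ↥U × Fkn => ((Ψinner ug : T ≃ₜ T) : C(T, T))
    have heq : (fun ug : ↥U × Fkn => ((Ψinner ug : T ≃ₜ T) : C(T, T)))
        = fun ug : ↥U × Fkn =>
          ((Gam ug.1 : T ≃ₜ T) : C(T, T)).comp
            (((h₀.1 : T ≃ₜ T) : C(T, T)).comp ((ug.2.1 : T ≃ₜ T) : C(T, T))) := by
      funext ug
      ext t
      rfl
    rw [heq]
    exact Continuous.compCM (hGamc.comp continuous_fst)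
      (Continuous.compCM continuous_const (hcoe.comp (continuous_subtype_val.comp continuous_snd)))
  refine ⟨U, hUo, hpU, ⟨⟨Φ, Ψ, hleft, hright⟩, hΦc, hΨc⟩, fun h => rfl⟩
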